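/- arXiv:2008.07969 — 2 statements merged into one kernel-verified Lean document; each statement's English description precedes it below -/
import Mathlib

section
/- For all natural numbers n and l with l ≤ n, the identity l! * S(n,l) = Σ_{k=0}^{n} A(n,k) * C(k, n-l) holds, where A(n,k) is the Eulerian number counting permutations of {1,...,n} with exactly k ascents. -/
/-- Stirling numbers of the second kind. -/
def stirling2 : ℕ → ℕ → ℕ
  | 0, 0 => 1
  | 0, _ + 1 => 0
  | _ + 1, 0 => 0
  | n + 1, k + 1 => (k + 1) * stirling2 n (k + 1) + stirling2 n k

/-- The number of ascents of a permutation `π` of `Fin n`: the number of indices `t`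
with `π(t) < π(t+1)`. -/
def ascents (n : ℕ) (π : Equiv.Perm (Fin n)) : ℕ :=
  ((Finset.univ : Finset (Fin n × Fin n)).filter
    (fun t => (t.1 : ℕ) + 1 = (t.2 : ℕ) ∧ π t.1 < π t.2)).card

/-- The Eulerian number `A(n,k)`: the number of permutations of `{1,...,n}` with
exactly `k` ascents. -/
def eulerian (n k : ℕ) : ℕ :=
  Fintype.card {π : Equiv.Perm (Fin n) // ascents n π = k}

def word (m : ℕ) (π : Equiv.Perm (Fin m)) (j : ℕ) : ℕ :=
  if h : j < m then (π ⟨j, h⟩ : ℕ) else m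

def ascSet (m : ℕ) (π : Equiv.Perm (Fin m)) : Finset ℕ :=
  (Finset.range (m - 1)).filter (fun s => word m π s < word m π (s + 1))

lemma word_lt {m : ℕ} (π : Equiv.Perm (Fin m)) {j : ℕ} (h : j < m) : word m π j < m := by
  simp only [word, dif_pos h]
  exact (π ⟨j, h⟩).2

lemma mem_ascSet {m : ℕ} (π : Equiv.Perm (Fin m)) (s : ℕ) :
    s ∈ ascSet m π ↔ s < m - 1 ∧ word m π s < word m π (s + 1) := by
  simp [ascSet, Finset.mem_filter, Finset.mem_range]

lemma ascents_eq (m : ℕ) (π : Equiv.Perm (Fin m)) : ascents m π = (ascSet m π).card := by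
  rcases m with _ | m'
  · unfold ascents ascSet
    simp
  unfold ascents
  apply Finset.card_nbij' (fun t => (t.1.1 : ℕ))
      (fun s => (⟨min s m', by omega⟩, ⟨min (s + 1) m', by omega⟩))
  · intro t ht
    simp only [Finset.mem_coe, Finset.mem_filter, Finset.mem_univ, true_and] at ht
    obtain ⟨h1, h2⟩ := ht
    have ht1 : (t.1.1 : ℕ) < m' + 1 := t.1.2
    have ht2 : (t.2.1 : ℕ) < m' + 1 := t.2.2
    simp only [Finset.mem_coe]
    rw [mem_ascSet]
    constructor
    · omega
    · simp only [word, dif_pos ht1, dif_pos (h1 ▸ ht2)]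
      have e1 : (⟨(t.1.1 : ℕ), ht1⟩ : Fin (m' + 1)) = t.1 := by ext; rfl
      have e2 : (⟨(t.1.1 : ℕ) + 1, h1 ▸ ht2⟩ : Fin (m' + 1)) = t.2 := by ext; simp [h1]
      rw [e1, e2]
      exact h2
  · intro s hs
    rw [Finset.mem_coe, mem_ascSet] at hs
    obtain ⟨h1, h2⟩ := hs
    have hm1 : min s m' = s := by omega
    have hm2 : min (s + 1) m' = s + 1 := by omega
    simp only [Finset.mem_coe, Finset.mem_filter, Finset.mem_univ, true_and, hm1, hm2]
    simp only [word, dif_pos (show s < m' + 1 by omega),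
      dif_pos (show s + 1 < m' + 1 by omega)] at h2
    exact h2
  · intro t ht
    simp only [Finset.mem_coe, Finset.mem_filter, Finset.mem_univ, true_and] at ht
    obtain ⟨h1, _⟩ := ht
    have ht1 : (t.1.1 : ℕ) < m' + 1 := t.1.2
    have ht2 : (t.2.1 : ℕ) < m' + 1 := t.2.2
    ext <;> simp <;> omega
  · intro s hs
    rw [Finset.mem_coe, mem_ascSet] at hs
    simp; omega

def ins {n : ℕ} (σ : Equiv.Perm (Fin n)) (p : Fin (n + 1)) : Equiv.Perm (Fin (n + 1)) :=
  ((finSuccEquiv' p).trans (Equiv.optionCongr σ)).trans (finSuccEquiv' (Fin.last n)).symm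

lemma ins_apply_val {n : ℕ} (σ : Equiv.Perm (Fin n)) (p : Fin (n + 1)) (j : Fin (n + 1)) :
    ((ins σ p) j : ℕ) =
      if j.1 < p.1 then word n σ j.1 else if j.1 = p.1 then n else word n σ (j.1 - 1) := by
  have hp : p.1 ≤ n := by omega
  have hj2 : j.1 ≤ n := by omega
  rcases lt_trichotomy j.1 p.1 with h | h | h
  · have hjn : j.1 < n := by omega
    have hj : j = (⟨j.1, hjn⟩ : Fin n).castSucc := by ext; simp
    have hlt : (⟨j.1, hjn⟩ : Fin n).castSucc < p := by
      rw [Fin.lt_def]; simpa using h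
    rw [if_pos h, hj]
    simp only [ins, Equiv.trans_apply, finSuccEquiv'_below hlt, Equiv.optionCongr_apply,
      Option.map_some, finSuccEquiv'_symm_some, Fin.succAbove_last, Fin.coe_castSucc]
    simp [word, dif_pos hjn]
  · rw [if_neg (by omega), if_pos h]
    have hj : j = p := by ext; exact h
    rw [hj]
    simp [ins, finSuccEquiv'_at, finSuccEquiv'_symm_none]
  · have hjn : j.1 - 1 < n := by omega
    have hj : j = (⟨j.1 - 1, hjn⟩ : Fin n).succ := by ext; simp; omega
    have hle : p ≤ (⟨j.1 - 1, hjn⟩ : Fin n).castSucc := by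
      rw [Fin.le_def]; simp; omega
    rw [if_neg (by omega), if_neg (by omega), hj]
    simp only [ins, Equiv.trans_apply, finSuccEquiv'_above hle, Equiv.optionCongr_apply,
      Option.map_some, finSuccEquiv'_symm_some, Fin.succAbove_last, Fin.coe_castSucc]
    simp [word, dif_pos hjn]

lemma word_ins {n : ℕ} (σ : Equiv.Perm (Fin n)) (p : Fin (n + 1)) {j : ℕ} (hj : j ≤ n) :
    word (n + 1) (ins σ p) j =
      if j < p.1 then word n σ j else if j = p.1 then n else word n σ (j - 1) := by
  have hjn : j < n + 1 := by omega
  rw [word, dif_pos hjn]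
  exact ins_apply_val σ p ⟨j, hjn⟩

lemma mem_ascSet_ins {n : ℕ} (σ : Equiv.Perm (Fin n)) (p : Fin (n + 1)) (s : ℕ) :
    s ∈ ascSet (n + 1) (ins σ p) ↔
      (s + 1 < p.1 ∧ s ∈ ascSet n σ) ∨ s + 1 = p.1 ∨ (p.1 < s ∧ s - 1 ∈ ascSet n σ) := by
  have hp : p.1 ≤ n := by omega
  rw [mem_ascSet]
  constructor
  · rintro ⟨hs, hw⟩
    have hs' : s < n := by omega
    rw [word_ins σ p (by omega), word_ins σ p (by omega)] at hw
    rcases lt_trichotomy (s + 1) p.1 with h | h | h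
    · rw [if_pos (by omega), if_pos h] at hw
      exact Or.inl ⟨h, (mem_ascSet σ s).2 ⟨by omega, hw⟩⟩
    · exact Or.inr (Or.inl h)
    · rcases lt_trichotomy s p.1 with h2 | h2 | h2
      · omega
      · rw [if_neg (by omega), if_pos h2, if_neg (by omega), if_neg (by omega)] at hw
        have := word_lt σ (show s + 1 - 1 < n by omega)
        omega
      · rw [if_neg (by omega), if_neg (by omega), if_neg (by omega), if_neg (by omega)] at hw
        refine Or.inr (Or.inr ⟨h2, (mem_ascSet σ (s - 1)).2 ⟨by omega, ?_⟩⟩)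
        have e : s - 1 + 1 = s := by omega
        rw [e]
        have e2 : s + 1 - 1 = s := by omega
        rwa [e2] at hw
  · rintro (⟨h1, h2⟩ | h | ⟨h1, h2⟩)
    · rw [mem_ascSet] at h2
      obtain ⟨h2a, h2b⟩ := h2
      refine ⟨by omega, ?_⟩
      rw [word_ins σ p (by omega), word_ins σ p (by omega), if_pos (by omega), if_pos h1]
      exact h2b
    · have hs' : s < n := by omega
      refine ⟨by omega, ?_⟩
      rw [word_ins σ p (by omega), word_ins σ p (by omega), if_pos (by omega),
        if_neg (by omega), if_pos h]
      exact word_lt σ hs'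
    · rw [mem_ascSet] at h2
      obtain ⟨h2a, h2b⟩ := h2
      have hs' : s < n := by omega
      refine ⟨by omega, ?_⟩
      rw [word_ins σ p (by omega), word_ins σ p (by omega), if_neg (by omega),
        if_neg (by omega), if_neg (by omega), if_neg (by omega)]
      have e : s + 1 - 1 = s := by omega
      rw [e]
      have e2 : s - 1 + 1 = s := by omega
      rwa [e2] at h2b

def gmap (p : ℕ) (s : ℕ) : ℕ := if s + 1 ≤ p then s else s + 1

lemma gmap_inj (p : ℕ) : Function.Injective (gmap p) := by
  intro a b
  unfold gmap
  split_ifs <;> omega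

lemma ascSet_ins_pos {n : ℕ} (σ : Equiv.Perm (Fin n)) (p : Fin (n + 1)) (hp : 0 < p.1) :
    ascSet (n + 1) (ins σ p) = insert (p.1 - 1) ((ascSet n σ).image (gmap p.1)) := by
  ext s
  rw [mem_ascSet_ins]
  simp only [Finset.mem_insert, Finset.mem_image]
  constructor
  · rintro (⟨h1, h2⟩ | h | ⟨h1, h2⟩)
    · exact Or.inr ⟨s, h2, by unfold gmap; rw [if_pos (by omega)]⟩
    · exact Or.inl (by omega)
    · refine Or.inr ⟨s - 1, h2, ?_⟩
      unfold gmap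
      rw [if_neg (by omega)]
      omega
  · rintro (h | ⟨t, ht, rfl⟩)
    · subst h
      exact Or.inr (Or.inl (by omega))
    · by_cases hc : t + 1 ≤ p.1
      · simp only [gmap, if_pos hc]
        rcases (by omega : t + 1 < p.1 ∨ t + 1 = p.1) with h | h
        · exact Or.inl ⟨h, ht⟩
        · exact Or.inr (Or.inl h)
      · simp only [gmap, if_neg hc]
        refine Or.inr (Or.inr ⟨by omega, ?_⟩)
        simpa using ht

lemma card_ascSet_ins_zero {n : ℕ} (σ : Equiv.Perm (Fin n)) (p : Fin (n + 1)) (hp : p.1 = 0) :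
    (ascSet (n + 1) (ins σ p)).card = (ascSet n σ).card := by
  have : ascSet (n + 1) (ins σ p) = (ascSet n σ).image (· + 1) := by
    ext s
    rw [mem_ascSet_ins]
    simp only [Finset.mem_image, hp]
    constructor
    · rintro (⟨h1, _⟩ | h | ⟨h1, h2⟩)
      · omega
      · omega
      · exact ⟨s - 1, h2, by omega⟩
    · rintro ⟨t, ht, rfl⟩
      exact Or.inr (Or.inr ⟨by omega, by simpa using ht⟩)
  rw [this, Finset.card_image_of_injective _ (fun a b => by omega)]

lemma card_ascSet_ins_mem {n : ℕ} (σ : Equiv.Perm (Fin n)) (p : Fin (n + 1)) (hp : 0 < p.1)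
    (hm : p.1 - 1 ∈ ascSet n σ) :
    (ascSet (n + 1) (ins σ p)).card = (ascSet n σ).card := by
  rw [ascSet_ins_pos σ p hp, Finset.insert_eq_self.2, Finset.card_image_of_injective _ (gmap_inj _)]
  exact Finset.mem_image.2 ⟨p.1 - 1, hm, by unfold gmap; rw [if_pos (by omega)]⟩

lemma card_ascSet_ins_notmem {n : ℕ} (σ : Equiv.Perm (Fin n)) (p : Fin (n + 1)) (hp : 0 < p.1)
    (hm : p.1 - 1 ∉ ascSet n σ) :
    (ascSet (n + 1) (ins σ p)).card = (ascSet n σ).card + 1 := by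
  rw [ascSet_ins_pos σ p hp, Finset.card_insert_of_notMem,
    Finset.card_image_of_injective _ (gmap_inj _)]
  intro hmem
  obtain ⟨t, ht, hgt⟩ := Finset.mem_image.1 hmem
  unfold gmap at hgt
  by_cases hc : t + 1 ≤ p.1
  · rw [if_pos hc] at hgt
    subst hgt
    exact hm ht
  · rw [if_neg hc] at hgt
    omega

lemma ins_self {n : ℕ} (σ : Equiv.Perm (Fin n)) (p : Fin (n + 1)) : ins σ p p = Fin.last n := by
  simp [ins, finSuccEquiv'_at, finSuccEquiv'_symm_none]

lemma ins_succAbove {n : ℕ} (σ : Equiv.Perm (Fin n)) (p : Fin (n + 1)) (i : Fin n) :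
    ins σ p (p.succAbove i) = (σ i).castSucc := by
  simp [ins, finSuccEquiv'_succAbove, finSuccEquiv'_symm_some]

lemma ins_bijective (n : ℕ) :
    Function.Bijective (fun sp : Equiv.Perm (Fin n) × Fin (n + 1) => ins sp.1 sp.2) := by
  rw [Fintype.bijective_iff_injective_and_card]
  constructor
  · rintro ⟨σ, p⟩ ⟨σ', p'⟩ h
    simp only at h
    have hp : p = p' := by
      apply (ins σ p).injective
      rw [ins_self, h, ins_self]
    subst hp
    have hσ : σ = σ' := by
      apply Equiv.ext
      intro i
      have h1 := ins_succAbove σ p i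
      have h2 := ins_succAbove σ' p i
      rw [h, h2] at h1
      exact Fin.castSucc_injective n h1.symm
    rw [hσ]
  · simp only [Fintype.card_prod, Fintype.card_perm, Fintype.card_fin, Nat.factorial_succ]
    ring

lemma eulerian_eq_card_filter (n k : ℕ) :
    eulerian n k =
      (Finset.univ.filter (fun π : Equiv.Perm (Fin n) => (ascSet n π).card = k)).card := by
  rw [eulerian, Fintype.card_subtype]
  congr 1
  apply Finset.filter_congr
  intro π _
  rw [ascents_eq]

lemma card_filter_comp_bijective {α β : Type*} [Fintype α] [DecidableEq β] (e : α → β)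
    (he : Function.Bijective e) (Q : β → Prop) [DecidablePred Q] [Fintype β] :
    (Finset.univ.filter Q).card = (Finset.univ.filter (fun a => Q (e a))).card := by
  have h : Finset.univ.filter Q = (Finset.univ.filter (fun a => Q (e a))).image e := by
    ext b
    simp only [Finset.mem_filter, Finset.mem_univ, true_and, Finset.mem_image]
    constructor
    · intro hb
      obtain ⟨a, rfl⟩ := he.surjective b
      exact ⟨a, hb, rfl⟩
    · rintro ⟨a, ha, rfl⟩
      exact ha
  rw [h, Finset.card_image_of_injective _ he.injective]

lemma card_filter_prod {α β : Type*} [Fintype α] [Fintype β] (R : α × β → Prop) [DecidablePred R] :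
    (Finset.univ.filter R).card = ∑ a : α, (Finset.univ.filter (fun b => R (a, b))).card := by
  rw [Finset.card_filter, ← Finset.univ_product_univ, Finset.sum_product]
  refine Finset.sum_congr rfl fun a _ => ?_
  rw [Finset.card_filter]

lemma card_filter_fin (m : ℕ) (Q : ℕ → Prop) [DecidablePred Q] :
    (Finset.univ.filter (fun p : Fin m => Q p.1)).card = ((Finset.range m).filter Q).card := by
  apply Finset.card_bij (fun p _ => p.1)
  · intro p hp
    simp only [Finset.mem_filter, Finset.mem_univ, true_and] at hp
    simp only [Finset.mem_filter, Finset.mem_range]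
    exact ⟨p.2, hp⟩
  · intro a _ b _ hab
    exact Fin.ext hab
  · intro b hb
    simp only [Finset.mem_filter, Finset.mem_range] at hb
    exact ⟨⟨b, hb.1⟩, by simp [hb.2], rfl⟩

lemma count_p_eq {n : ℕ} (σ : Equiv.Perm (Fin n)) :
    (Finset.univ.filter
      (fun p : Fin (n + 1) => (ascSet (n + 1) (ins σ p)).card = (ascSet n σ).card)).card =
      (ascSet n σ).card + 1 := by
  have hP : ∀ p : Fin (n + 1),
      ((ascSet (n + 1) (ins σ p)).card = (ascSet n σ).card ↔
        (p.1 = 0 ∨ (0 < p.1 ∧ p.1 - 1 ∈ ascSet n σ))) := by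
    intro p
    rcases Nat.eq_zero_or_pos p.1 with hp | hp
    · rw [card_ascSet_ins_zero σ p hp]
      exact ⟨fun _ => Or.inl hp, fun _ => rfl⟩
    · by_cases hm : p.1 - 1 ∈ ascSet n σ
      · rw [card_ascSet_ins_mem σ p hp hm]
        exact ⟨fun _ => Or.inr ⟨hp, hm⟩, fun _ => rfl⟩
      · rw [card_ascSet_ins_notmem σ p hp hm]
        constructor
        · intro h; omega
        · rintro (h0 | ⟨_, hmem⟩)
          · omega
          · exact absurd hmem hm
  rw [Finset.filter_congr (fun p _ => hP p),
    card_filter_fin (n + 1) (fun s => s = 0 ∨ (0 < s ∧ s - 1 ∈ ascSet n σ))]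
  have hset : (Finset.range (n + 1)).filter (fun s => s = 0 ∨ (0 < s ∧ s - 1 ∈ ascSet n σ)) =
      insert 0 ((ascSet n σ).image (· + 1)) := by
    ext s
    simp only [Finset.mem_filter, Finset.mem_range, Finset.mem_insert, Finset.mem_image]
    constructor
    · rintro ⟨hs, h0 | ⟨hpos, hmem⟩⟩
      · exact Or.inl h0
      · exact Or.inr ⟨s - 1, hmem, by omega⟩
    · rintro (rfl | ⟨t, ht, rfl⟩)
      · exact ⟨by omega, Or.inl rfl⟩
      · have := (mem_ascSet σ t).1 ht
        exact ⟨by omega, Or.inr ⟨by omega, by simpa using ht⟩⟩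
  rw [hset, Finset.card_insert_of_notMem (by simp),
    Finset.card_image_of_injective _ (fun a b h => by omega)]

lemma count_p_succ {n : ℕ} (σ : Equiv.Perm (Fin n)) :
    (Finset.univ.filter
      (fun p : Fin (n + 1) => (ascSet (n + 1) (ins σ p)).card = (ascSet n σ).card + 1)).card =
      n - (ascSet n σ).card := by
  have hP : ∀ p : Fin (n + 1),
      ((ascSet (n + 1) (ins σ p)).card = (ascSet n σ).card + 1 ↔
        (0 < p.1 ∧ p.1 - 1 ∉ ascSet n σ)) := by
    intro p
    rcases Nat.eq_zero_or_pos p.1 with hp | hp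
    · rw [card_ascSet_ins_zero σ p hp]
      constructor
      · intro h; omega
      · rintro ⟨hpos, _⟩; omega
    · by_cases hm : p.1 - 1 ∈ ascSet n σ
      · rw [card_ascSet_ins_mem σ p hp hm]
        constructor
        · intro h; omega
        · rintro ⟨_, hmem⟩; exact absurd hm hmem
      · rw [card_ascSet_ins_notmem σ p hp hm]
        exact ⟨fun _ => ⟨hp, hm⟩, fun _ => rfl⟩
  rw [Finset.filter_congr (fun p _ => hP p),
    card_filter_fin (n + 1) (fun s => 0 < s ∧ s - 1 ∉ ascSet n σ)]
  have hset : (Finset.range (n + 1)).filter (fun s => 0 < s ∧ s - 1 ∉ ascSet n σ) =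
      ((Finset.range n).filter (fun t => t ∉ ascSet n σ)).image (· + 1) := by
    ext s
    simp only [Finset.mem_filter, Finset.mem_range, Finset.mem_image]
    constructor
    · rintro ⟨hs, hpos, hmem⟩
      exact ⟨s - 1, ⟨by omega, hmem⟩, by omega⟩
    · rintro ⟨t, ⟨htn, htm⟩, rfl⟩
      exact ⟨by omega, by omega, by simpa using htm⟩
  rw [hset, Finset.card_image_of_injective _ (fun a b h => by omega)]
  have hsplit := Finset.card_filter_add_card_filter_not
    (s := Finset.range n) (p := fun t => t ∈ ascSet n σ)
  have hmemf : (Finset.range n).filter (fun t => t ∈ ascSet n σ) = ascSet n σ := by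
    rw [Finset.filter_mem_eq_inter, Finset.inter_eq_right]
    intro t ht
    have := (mem_ascSet σ t).1 ht
    simp only [Finset.mem_range]
    omega
  rw [hmemf, Finset.card_range] at hsplit
  omega

lemma count_p_other {n : ℕ} (σ : Equiv.Perm (Fin n)) (K : ℕ) (h1 : (ascSet n σ).card ≠ K)
    (h2 : (ascSet n σ).card + 1 ≠ K) :
    (Finset.univ.filter (fun p : Fin (n + 1) => (ascSet (n + 1) (ins σ p)).card = K)).card = 0 := by
  rw [Finset.card_eq_zero, Finset.filter_eq_empty_iff]
  intro p _
  rcases Nat.eq_zero_or_pos p.1 with hp | hp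
  · rw [card_ascSet_ins_zero σ p hp]; exact h1
  · by_cases hm : p.1 - 1 ∈ ascSet n σ
    · rw [card_ascSet_ins_mem σ p hp hm]; exact h1
    · rw [card_ascSet_ins_notmem σ p hp hm]; exact h2

lemma eulerian_succ_expand (n K : ℕ) :
    eulerian (n + 1) K = ∑ σ : Equiv.Perm (Fin n),
      (Finset.univ.filter
        (fun p : Fin (n + 1) => (ascSet (n + 1) (ins σ p)).card = K)).card := by
  rw [eulerian_eq_card_filter,
    card_filter_comp_bijective _ (ins_bijective n)
      (fun π : Equiv.Perm (Fin (n + 1)) => (ascSet (n + 1) π).card = K),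
    card_filter_prod]

lemma eulerian_succ_zero (n : ℕ) : eulerian (n + 1) 0 = eulerian n 0 := by
  rw [eulerian_succ_expand]
  have h : ∀ σ : Equiv.Perm (Fin n),
      (Finset.univ.filter
        (fun p : Fin (n + 1) => (ascSet (n + 1) (ins σ p)).card = 0)).card =
      if (ascSet n σ).card = 0 then 1 else 0 := by
    intro σ
    by_cases h : (ascSet n σ).card = 0
    · rw [if_pos h]
      have := count_p_eq σ
      rw [h] at this
      simpa using this
    · rw [if_neg h]
      exact count_p_other σ 0 h (by omega)
  rw [Finset.sum_congr rfl (fun σ _ => h σ), ← Finset.card_filter, ← eulerian_eq_card_filter]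

lemma eulerian_succ_succ (n j : ℕ) :
    eulerian (n + 1) (j + 1) = (j + 2) * eulerian n (j + 1) + (n - j) * eulerian n j := by
  rw [eulerian_succ_expand]
  have h : ∀ σ : Equiv.Perm (Fin n),
      (Finset.univ.filter
        (fun p : Fin (n + 1) => (ascSet (n + 1) (ins σ p)).card = j + 1)).card =
      (if (ascSet n σ).card = j + 1 then j + 2 else 0) +
        (if (ascSet n σ).card = j then n - j else 0) := by
    intro σ
    by_cases h1 : (ascSet n σ).card = j + 1
    · rw [if_pos h1, if_neg (by omega)]
      have := count_p_eq σ
      rw [h1] at this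
      rw [this]
    · rw [if_neg h1]
      by_cases h2 : (ascSet n σ).card = j
      · rw [if_pos h2]
        have := count_p_succ σ
        rw [h2] at this
        rw [this]
        omega
      · rw [if_neg h2]
        rw [count_p_other σ (j + 1) h1 (by omega)]
  rw [Finset.sum_congr rfl (fun σ _ => h σ), Finset.sum_add_distrib]
  congr 1
  · rw [← Finset.sum_filter, Finset.sum_const, smul_eq_mul, eulerian_eq_card_filter, mul_comm]
  · rw [← Finset.sum_filter, Finset.sum_const, smul_eq_mul, eulerian_eq_card_filter, mul_comm]

lemma eulerian_vanish (n k : ℕ) (h1 : n ≤ k) (h2 : 1 ≤ k) : eulerian n k = 0 := by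
  rw [eulerian_eq_card_filter, Finset.card_eq_zero, Finset.filter_eq_empty_iff]
  intro π _
  have hle : (ascSet n π).card ≤ n - 1 := by
    have := Finset.card_le_card (Finset.filter_subset
      (fun s => word n π s < word n π (s + 1)) (Finset.range (n - 1)))
    rwa [Finset.card_range] at this
  omega

lemma sum_eulerian (n : ℕ) :
    ∑ k ∈ Finset.range (n + 1), eulerian n k = Nat.factorial n := by
  have h := Finset.card_eq_sum_card_fiberwise
    (f := fun π : Equiv.Perm (Fin n) => (ascSet n π).card)
    (s := Finset.univ) (t := Finset.range (n + 1))
    (fun π _ => by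
      have hle : (ascSet n π).card ≤ n - 1 := by
        have := Finset.card_le_card (Finset.filter_subset
          (fun s => word n π s < word n π (s + 1)) (Finset.range (n - 1)))
        rwa [Finset.card_range] at this
      simp only [Finset.mem_coe, Finset.mem_range]
      omega)
  rw [Finset.card_univ, Fintype.card_perm, Fintype.card_fin] at h
  refine Eq.trans ?_ h.symm
  exact Finset.sum_congr rfl (fun k _ => eulerian_eq_card_filter n k)

lemma eulerian_zero_zero : eulerian 0 0 = 1 := by
  rw [eulerian_eq_card_filter, Finset.filter_true_of_mem (fun π _ => by simp [ascSet])]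
  rw [Finset.card_univ, Fintype.card_perm, Fintype.card_fin]
  rfl

lemma stirling2_gt (n : ℕ) : ∀ k, n < k → stirling2 n k = 0 := by
  induction n with
  | zero => intro k hk; match k, hk with | k + 1, _ => rfl
  | succ n IH =>
    intro k hk
    match k, hk with
    | k + 1, hk =>
      show (k + 1) * stirling2 n (k + 1) + stirling2 n k = 0
      rw [IH (k + 1) (by omega), IH k (by omega)]
      ring

lemma stirling2_self (n : ℕ) : stirling2 n n = 1 := by
  induction n with
  | zero => rfl
  | succ n IH =>
    show (n + 1) * stirling2 n (n + 1) + stirling2 n n = 1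
    rw [stirling2_gt n (n + 1) (by omega), IH]
    ring

lemma key_binom {n k m l : ℕ} (hk : k ≤ n) (hl : l + m = n) :
    (k + 1) * Nat.choose k (m + 1) + (n - k) * Nat.choose (k + 1) (m + 1) =
      l * (Nat.choose k m + Nat.choose k (m + 1)) := by
  by_cases hkm : k < m
  · rw [Nat.choose_eq_zero_of_lt (by omega), Nat.choose_eq_zero_of_lt (by omega),
      Nat.choose_eq_zero_of_lt (by omega)]
    simp
  push_neg at hkm
  obtain ⟨c, hc⟩ : ∃ c, k = m + c := ⟨k - m, by omega⟩
  obtain ⟨d, hd⟩ : ∃ d, n = k + d := ⟨n - k, by omega⟩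
  have hnk : n - k = d := by omega
  have hlcd : l = c + d := by omega
  have hpas : Nat.choose (k + 1) (m + 1) = Nat.choose k m + Nat.choose k (m + 1) :=
    Nat.choose_succ_succ k m
  have hrec : Nat.choose k (m + 1) * (m + 1) = Nat.choose k m * (k - m) :=
    Nat.choose_succ_right_eq k m
  have hkm2 : k - m = c := by omega
  rw [hkm2] at hrec
  rw [hpas, hnk, hlcd]
  set a := Nat.choose k m with ha
  set b := Nat.choose k (m + 1) with hb
  rw [hc]
  zify
  zify at hrec
  linear_combination hrec

lemma sum_eul_succ (n m : ℕ) :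
    ∑ k ∈ Finset.range (n + 2), eulerian (n + 1) k * Nat.choose k m =
      ∑ k ∈ Finset.range (n + 1),
        eulerian n k * ((k + 1) * Nat.choose k m + (n - k) * Nat.choose (k + 1) m) := by
  rw [Finset.sum_range_succ' (fun k => eulerian (n + 1) k * Nat.choose k m) (n + 1)]
  rw [show eulerian (n + 1) 0 = eulerian n 0 from eulerian_succ_zero n]
  have e1 : ∀ j ∈ Finset.range (n + 1),
      eulerian (n + 1) (j + 1) * Nat.choose (j + 1) m =
        (j + 1 + 1) * (eulerian n (j + 1) * Nat.choose (j + 1) m) +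
          (n - j) * (eulerian n j * Nat.choose (j + 1) m) := by
    intro j _
    rw [eulerian_succ_succ]
    ring
  rw [Finset.sum_congr rfl e1, Finset.sum_add_distrib]
  have e2 := Finset.sum_range_succ' (fun k => (k + 1) * (eulerian n k * Nat.choose k m)) (n + 1)
  rw [Finset.sum_range_succ (fun k => (k + 1) * (eulerian n k * Nat.choose k m)) (n + 1),
    eulerian_vanish n (n + 1) (by omega) (by omega)] at e2
  simp only [mul_zero, zero_mul, add_zero, zero_add, one_mul] at e2
  rw [add_right_comm, ← e2, ← Finset.sum_add_distrib]
  apply Finset.sum_congr rfl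
  intro k _
  ring

theorem factorial_mul_stirling_eq_sum_eulerian (n l : ℕ) (h : l ≤ n) :
    Nat.factorial l * stirling2 n l =
      ∑ k ∈ Finset.range (n + 1), eulerian n k * Nat.choose k (n - l) := by
  induction n generalizing l with
  | zero =>
    obtain rfl : l = 0 := Nat.le_zero.mp h
    rw [Finset.sum_range_one, eulerian_zero_zero]
    rfl
  | succ n IH =>
    rcases Nat.eq_zero_or_pos l with rfl | hl
    · rw [show Nat.factorial 0 * stirling2 (n + 1) 0 = 0 from by rfl]
      symm
      apply Finset.sum_eq_zero
      intro k hk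
      simp only [Finset.mem_range] at hk
      by_cases hke : k = n + 1
      · rw [hke, eulerian_vanish (n + 1) (n + 1) le_rfl (by omega), zero_mul]
      · rw [Nat.sub_zero, Nat.choose_eq_zero_of_lt (by omega), mul_zero]
    · obtain ⟨l', rfl⟩ : ∃ l', l = l' + 1 := ⟨l - 1, by omega⟩
      rw [show n + 1 + 1 = n + 2 from rfl, sum_eul_succ n (n + 1 - (l' + 1))]
      rcases Nat.lt_or_ge l' n with hln | hln
      · -- 1 ≤ l ≤ n
        have hm : n + 1 - (l' + 1) = (n - (l' + 1)) + 1 := by omega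
        rw [hm]
        have step : ∀ k ∈ Finset.range (n + 1),
            eulerian n k * ((k + 1) * Nat.choose k ((n - (l' + 1)) + 1) +
              (n - k) * Nat.choose (k + 1) ((n - (l' + 1)) + 1)) =
            (l' + 1) * (eulerian n k * Nat.choose k (n - (l' + 1))) +
              (l' + 1) * (eulerian n k * Nat.choose k ((n - (l' + 1)) + 1)) := by
          intro k hk
          simp only [Finset.mem_range] at hk
          rw [key_binom (by omega : k ≤ n) (by omega : (l' + 1) + (n - (l' + 1)) = n)]
          ring
        rw [Finset.sum_congr rfl step, Finset.sum_add_distrib, ← Finset.mul_sum, ← Finset.mul_sum]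
        rw [← IH (l' + 1) (by omega)]
        have hshift : (n - (l' + 1)) + 1 = n - l' := by omega
        rw [hshift, ← IH l' (by omega)]
        show Nat.factorial (l' + 1) * stirling2 (n + 1) (l' + 1) = _
        rw [show stirling2 (n + 1) (l' + 1) =
          (l' + 1) * stirling2 n (l' + 1) + stirling2 n l' from rfl]
        rw [Nat.factorial_succ]
        ring
      · -- l = n + 1
        obtain rfl : l' = n := by omega
        rw [show l' + 1 - (l' + 1) = 0 from by omega]
        have step : ∀ k ∈ Finset.range (l' + 1),
            eulerian l' k * ((k + 1) * Nat.choose k 0 + (l' - k) * Nat.choose (k + 1) 0) =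
              eulerian l' k * (l' + 1) := by
          intro k hk
          simp only [Finset.mem_range] at hk
          rw [Nat.choose_zero_right, Nat.choose_zero_right]
          congr 1
          omega
        rw [Finset.sum_congr rfl step, ← Finset.sum_mul, sum_eulerian, stirling2_self,
          Nat.factorial_succ]
        ring
end

section
/- Define S(n) = Σ_{k=1}^{n} C(n,k) * (k! * S2(n,k))^2, where S2 denotes Stirling numbers of the second kind. Then for all n > 2, S(n) > n^{1.5 n}. -/
/-- `S(n) = Σ_{k=1}^{n} C(n,k) * (k! * S2(n,k))^2`. -/
def coverCount (n : ℕ) : ℕ :=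
  ∑ k ∈ Finset.Icc 1 n, Nat.choose n k * (Nat.factorial k * stirling2 n k) ^ 2

lemma stirling2_zero_succ (n : ℕ) : stirling2 (n + 1) 0 = 0 := rfl

lemma stirling2_eq_zero : ∀ n k : ℕ, n < k → stirling2 n k = 0 := by
  intro n
  induction n with
  | zero => intro k hk; cases k with
    | zero => omega
    | succ k => rfl
  | succ n ih =>
    intro k hk
    cases k with
    | zero => omega
    | succ k =>
      show (k + 1) * stirling2 n (k + 1) + stirling2 n k = 0
      rw [ih (k+1) (by omega), ih k (by omega)]
      ring

/-- real version of `x * (x)_k = (x)_{k+1} + k * (x)_k` -/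
lemma desc_step (x k : ℕ) :
    (x : ℝ) * (x.descFactorial k : ℝ) =
      (x.descFactorial (k + 1) : ℝ) + (k : ℝ) * (x.descFactorial k : ℝ) := by
  rcases le_or_gt k x with h | h
  · rw [Nat.descFactorial_succ]
    push_cast [Nat.cast_sub h]
    ring
  · rw [Nat.descFactorial_of_lt h, Nat.descFactorial_of_lt (by omega)]
    push_cast
    ring

/-- `x^n = Σ_k (x)_k · S2(n,k)` -/
lemma pow_eq_sum_desc (n : ℕ) : ∀ x : ℕ,
    ((x : ℝ)) ^ n = ∑ k ∈ Finset.range (n + 1),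
      (x.descFactorial k : ℝ) * (stirling2 n k : ℝ) := by
  induction n with
  | zero => intro x; simp [stirling2]
  | succ n ih =>
    intro x
    have hrec : ∀ k : ℕ, (stirling2 (n+1) (k+1) : ℝ)
        = ((k : ℝ) + 1) * (stirling2 n (k+1) : ℝ) + (stirling2 n k : ℝ) := by
      intro k
      show ((((k + 1) * stirling2 n (k + 1) + stirling2 n k : ℕ)) : ℝ) = _
      push_cast; ring
    have shift : ∑ k ∈ Finset.range (n + 1),
        (k : ℝ) * (x.descFactorial k : ℝ) * (stirling2 n k : ℝ)
        = ∑ k ∈ Finset.range (n + 1),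
        ((k : ℝ) + 1) * (x.descFactorial (k+1) : ℝ) * (stirling2 n (k+1) : ℝ) := by
      rw [Finset.sum_range_succ' (fun k =>
          (k : ℝ) * (x.descFactorial k : ℝ) * (stirling2 n k : ℝ)) n,
        Finset.sum_range_succ (fun k =>
          ((k : ℝ) + 1) * (x.descFactorial (k+1) : ℝ) * (stirling2 n (k+1) : ℝ)) n,
        stirling2_eq_zero n (n+1) (by omega)]
      push_cast
      simp
    calc ((x : ℝ)) ^ (n + 1)
        = (∑ k ∈ Finset.range (n + 1),
            (x.descFactorial k : ℝ) * (stirling2 n k : ℝ)) * (x : ℝ) := by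
          rw [pow_succ, ih]
      _ = ∑ k ∈ Finset.range (n + 1),
            ((x.descFactorial (k+1) : ℝ) + (k : ℝ) * (x.descFactorial k : ℝ)) *
              (stirling2 n k : ℝ) := by
          rw [Finset.sum_mul]
          refine Finset.sum_congr rfl fun k _ => ?_
          rw [mul_comm, ← mul_assoc, desc_step]
      _ = (∑ k ∈ Finset.range (n + 1),
            (x.descFactorial (k+1) : ℝ) * (stirling2 n k : ℝ))
          + ∑ k ∈ Finset.range (n + 1),
            (k : ℝ) * (x.descFactorial k : ℝ) * (stirling2 n k : ℝ) := by
          rw [← Finset.sum_add_distrib]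
          exact Finset.sum_congr rfl fun k _ => by ring
      _ = (∑ k ∈ Finset.range (n + 1),
            (x.descFactorial (k+1) : ℝ) * (stirling2 n k : ℝ))
          + ∑ k ∈ Finset.range (n + 1),
            ((k : ℝ) + 1) * (x.descFactorial (k+1) : ℝ) * (stirling2 n (k+1) : ℝ) := by
          rw [shift]
      _ = ∑ k ∈ Finset.range (n + 1),
            (x.descFactorial (k+1) : ℝ) * (stirling2 (n+1) (k+1) : ℝ) := by
          rw [← Finset.sum_add_distrib]
          refine Finset.sum_congr rfl fun k _ => ?_
          rw [hrec]; ring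
      _ = ∑ k ∈ Finset.range (n + 1 + 1),
            (x.descFactorial k : ℝ) * (stirling2 (n+1) k : ℝ) := by
          rw [Finset.sum_range_succ' (fun k =>
            (x.descFactorial k : ℝ) * (stirling2 (n+1) k : ℝ)) (n+1)]
          simp [stirling2_zero_succ]

theorem coverCount_gt (n : ℕ) (hn : 2 < n) :
    (n : ℝ) ^ ((1.5 : ℝ) * n) < (coverCount n : ℝ) := by
  -- first, extend the sum to range (n+1) and apply Cauchy-Schwarz
  have hnz : stirling2 n 0 = 0 := by
    cases n with
    | zero => omega
    | succ m => rfl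
  have hset : Finset.range (n + 1) = insert 0 (Finset.Icc 1 n) := by
    ext k; simp [Finset.mem_range, Finset.mem_Icc]; omega
  have hcover : (coverCount n : ℝ) = ∑ k ∈ Finset.range (n + 1),
      (n.choose k : ℝ) * ((k.factorial : ℝ) * (stirling2 n k : ℝ)) ^ 2 := by
    rw [hset, Finset.sum_insert (by simp), hnz]
    simp [coverCount]
  -- Cauchy-Schwarz : (Σ C * surj)² ≤ (Σ C) * (Σ C * surj²)
  set f : ℕ → ℝ := fun k => Real.sqrt (n.choose k)
  set g : ℕ → ℝ := fun k => Real.sqrt (n.choose k) * ((k.factorial : ℝ) * (stirling2 n k : ℝ))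
  have cs := Finset.sum_mul_sq_le_sq_mul_sq (Finset.range (n + 1)) f g
  have hfg : ∀ k, f k * g k = (n.choose k : ℝ) * ((k.factorial : ℝ) * (stirling2 n k : ℝ)) := by
    intro k
    simp only [f, g]
    rw [← mul_assoc, Real.mul_self_sqrt (by positivity)]
  have hf2 : ∀ k, f k ^ 2 = (n.choose k : ℝ) := by
    intro k; simp [f, Real.sq_sqrt]
  have hg2 : ∀ k, g k ^ 2 = (n.choose k : ℝ) * ((k.factorial : ℝ) * (stirling2 n k : ℝ)) ^ 2 := by
    intro k
    simp only [g, mul_pow]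
    rw [Real.sq_sqrt (by positivity)]
  simp only [hfg, hf2, hg2] at cs
  -- the left sum is n^n by the Stirling identity
  have hid : ∑ k ∈ Finset.range (n + 1),
      (n.choose k : ℝ) * ((k.factorial : ℝ) * (stirling2 n k : ℝ)) = (n : ℝ) ^ n := by
    rw [pow_eq_sum_desc n n]
    refine Finset.sum_congr rfl fun k _ => ?_
    rw [Nat.descFactorial_eq_factorial_mul_choose]
    push_cast
    ring
  have hchoose : ∑ k ∈ Finset.range (n + 1), (n.choose k : ℝ) = 2 ^ n := by
    rw [← Nat.cast_sum]
    rw [Nat.sum_range_choose]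
    push_cast
    ring
  rw [hid, hchoose, ← hcover] at cs
  -- now cs : (n^n)^2 ≤ 2^n * coverCount n
  rcases lt_or_ge n 5 with h5 | h5
  · -- n = 3 or 4 : direct computation
    interval_cases n
    · -- n = 3
      have hc : coverCount 3 = 147 := by decide
      rw [hc]
      have h45 : (1.5 : ℝ) * ((3:ℕ):ℝ) = 4 + 0.5 := by norm_num
      have h81 : ((3:ℕ):ℝ) ^ ((4:ℝ)) = 81 := by
        rw [show ((4:ℝ)) = ((4:ℕ):ℝ) by norm_num, Real.rpow_natCast]; norm_num
      rw [h45, Real.rpow_add (by norm_num), h81]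
      have hs : ((3:ℕ):ℝ) ^ (0.5 : ℝ) < 1.814 := by
        have h3 : ((3:ℕ):ℝ) ^ (0.5 : ℝ) = Real.sqrt 3 := by
          rw [Real.sqrt_eq_rpow]; norm_num
        rw [h3]
        rw [show (1.814 : ℝ) = Real.sqrt (1.814^2) by
          rw [Real.sqrt_sq (by norm_num)]]
        exact Real.sqrt_lt_sqrt (by norm_num) (by norm_num)
      nlinarith [Real.rpow_nonneg (by norm_num : (0:ℝ) ≤ ((3:ℕ):ℝ)) (0.5:ℝ)]
    · -- n = 4
      have hc : coverCount 4 = 6940 := by decide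
      rw [hc]
      have h6 : (1.5 : ℝ) * ((4:ℕ):ℝ) = ((6:ℕ):ℝ) := by norm_num
      rw [h6, Real.rpow_natCast]
      norm_num
  · -- n ≥ 5 : use Cauchy-Schwarz bound
    have hnpos : (0:ℝ) < n := by positivity
    -- key : n^(1.5 n) * 2^n < (n^n)^2
    have key : (n : ℝ) ^ ((1.5 : ℝ) * n) * 2 ^ n < ((n : ℝ) ^ n) ^ 2 := by
      have h1 : (n : ℝ) ^ ((1.5 : ℝ) * n) = ((n:ℝ) ^ (1.5 : ℝ)) ^ n := by
        rw [Real.rpow_mul (le_of_lt hnpos), Real.rpow_natCast]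
      have h2 : ((n : ℝ) ^ n) ^ 2 = ((n:ℝ) ^ (2 : ℝ)) ^ n := by
        rw [show ((2:ℝ)) = ((2:ℕ):ℝ) by norm_num, Real.rpow_natCast,
          ← pow_mul, ← pow_mul, mul_comm]
      rw [h1, h2, ← mul_pow]
      have hbase : (n:ℝ) ^ (1.5 : ℝ) * 2 < (n:ℝ) ^ (2 : ℝ) := by
        have hsplit : (n:ℝ) ^ (2 : ℝ) = (n:ℝ) ^ (1.5 : ℝ) * (n:ℝ) ^ (0.5 : ℝ) := by
          rw [← Real.rpow_add hnpos]; norm_num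
        rw [hsplit]
        have hsqrt : (2:ℝ) < (n:ℝ) ^ (0.5 : ℝ) := by
          have h4 : (4:ℝ) < (n:ℝ) := by
            have h5' : ((5:ℕ):ℝ) ≤ (n:ℝ) := Nat.cast_le.2 h5
            push_cast at h5'; linarith
          calc (2:ℝ) = (4:ℝ) ^ (0.5:ℝ) := by
                rw [show (4:ℝ) = 2^(2:ℕ) by norm_num, ← Real.rpow_natCast 2 2,
                  ← Real.rpow_mul (by norm_num)]
                norm_num
            _ < (n:ℝ) ^ (0.5:ℝ) :=
                Real.rpow_lt_rpow (by norm_num) h4 (by norm_num)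
        have hpos15 : (0:ℝ) < (n:ℝ) ^ (1.5 : ℝ) := Real.rpow_pos_of_pos hnpos _
        nlinarith
      apply pow_lt_pow_left₀ hbase
      · positivity
      · omega
    have h2pos : (0:ℝ) < 2 ^ n := by positivity
    have hlt : (n : ℝ) ^ ((1.5 : ℝ) * n) * 2 ^ n < 2 ^ n * (coverCount n : ℝ) :=
      lt_of_lt_of_le key cs
    have h' : (n : ℝ) ^ ((1.5 : ℝ) * n) * 2 ^ n < (coverCount n : ℝ) * 2 ^ n := by
      linarith
    exact lt_of_mul_lt_mul_right h' (le_of_lt h2pos)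
end
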